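/- arXiv:1805.05002 — 2 statements merged into one kernel-verified Lean document; each statement's English description precedes it below -/
import Mathlib

section
/- Let ψ_T, p_T, ψ, p ∈ (0,1), let K, N be positive integers, and set θ_T = 1 − (1−p_T)^K and θ = 1 − (1−p)^K. Let Y₁, …, Y_N be independent, identically distributed zero-inflated binomial (ZIB) random variables with parameters (ψ_T, K, p_T), let s_d be the number of indices i with Y_i ≥ 1 and d = ∑_{i=1}^N Y_i, and define the score component S₂ = (d − s_d·K·p)/(p(1−p)) − (N − s_d)·ψ·K·(1−θ)/((1 − ψθ)(1−p)). Then E(S₂) = N·ψ_T·K·(p_T − p·θ_T)/(p(1−p)) − N·(1 − ψ_T·θ_T)·ψ·K·(1−θ)/((1 − ψθ)(1−p)). -/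
/-- The probability mass function of the zero-inflated binomial distribution with
parameters `ψ`, `K`, `p`, for values `y = 0, 1, …, K`. -/
def zibPmf (ψ p : ℝ) (K : ℕ) (y : ℕ) : ℝ :=
  if y = 0 then 1 - ψ + ψ * (1 - p) ^ K
  else ψ * (K.choose y : ℝ) * p ^ y * (1 - p) ^ (K - y)

/-- Joint pmf of `N` i.i.d. zero-inflated binomial observations, each taking values in
`{0, 1, …, K}` (encoded as `Fin (K+1)`). -/
def zibJoint (ψ p : ℝ) (K N : ℕ) (ω : Fin N → Fin (K + 1)) : ℝ :=
  ∏ i, zibPmf ψ p K (ω i)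

/-- Expectation of a statistic `f` of `N` i.i.d. ZIB`(ψ, K, p)` observations. -/
def zibExp (ψ p : ℝ) (K N : ℕ) (f : (Fin N → Fin (K + 1)) → ℝ) : ℝ :=
  ∑ ω : Fin N → Fin (K + 1), zibJoint ψ p K N ω * f ω

/-- The total number of detections `d = ∑ᵢ Yᵢ`. -/
def dTot {K N : ℕ} (ω : Fin N → Fin (K + 1)) : ℝ :=
  ∑ i, ((ω i : ℕ) : ℝ)

/-- The number of sites with at least one detection, `s_d = #{i : Yᵢ ≥ 1}`. -/
def sDet {K N : ℕ} (ω : Fin N → Fin (K + 1)) : ℝ :=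
  ((Finset.univ.filter fun i => (ω i : ℕ) ≠ 0).card : ℝ)

open Finset

lemma binom_sum (p : ℝ) (K : ℕ) :
    ∑ y ∈ range (K+1), (K.choose y : ℝ) * p^y * (1-p)^(K-y) = 1 := by
  have h : p + (1 - p) = 1 := by ring
  calc ∑ y ∈ range (K+1), (K.choose y : ℝ) * p^y * (1-p)^(K-y)
      = ∑ y ∈ range (K+1), p^y * (1-p)^(K-y) * (K.choose y : ℝ) := by
        apply sum_congr rfl; intros; ring
    _ = (p + (1-p))^K := (add_pow p (1-p) K).symm
    _ = 1 := by rw [h, one_pow]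

lemma binom_mean (p : ℝ) (K : ℕ) :
    ∑ y ∈ range (K+1), (K.choose y : ℝ) * p^y * (1-p)^(K-y) * (y : ℝ) = K * p := by
  cases K with
  | zero => simp
  | succ m =>
    rw [sum_range_succ']
    have key : ∀ j : ℕ, ((m+1).choose (j+1) : ℝ) * ((j:ℝ)+1) = ((m:ℝ)+1) * (m.choose j : ℝ) := by
      intro j
      have := (Nat.add_one_mul_choose_eq m j).symm
      exact_mod_cast congrArg (fun n : ℕ => (n : ℝ)) this
    have step : ∀ j ∈ range (m+1),
        ((m+1).choose (j+1) : ℝ) * p^(j+1) * (1-p)^(m+1-(j+1)) * ((j+1 : ℕ) : ℝ)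
        = ((m:ℝ)+1) * p * ((m.choose j : ℝ) * p^j * (1-p)^(m-j)) := by
      intro j _
      have h1 : m + 1 - (j+1) = m - j := by omega
      rw [h1]
      calc ((m+1).choose (j+1) : ℝ) * p^(j+1) * (1-p)^(m-j) * ((j+1 : ℕ) : ℝ)
          = (((m+1).choose (j+1) : ℝ) * ((j:ℝ)+1)) * (p^(j+1) * (1-p)^(m-j)) := by
            push_cast; ring
        _ = (((m:ℝ)+1) * (m.choose j : ℝ)) * (p^(j+1) * (1-p)^(m-j)) := by rw [key j]
        _ = ((m:ℝ)+1) * p * ((m.choose j : ℝ) * p^j * (1-p)^(m-j)) := by ring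
    rw [sum_congr rfl step, ← mul_sum, binom_sum p m]
    push_cast
    ring

lemma zibPmf_eq (ψ p : ℝ) (K : ℕ) (y : ℕ) :
    zibPmf ψ p K y = ψ * ((K.choose y : ℝ) * p^y * (1-p)^(K-y))
      + (if y = 0 then 1 - ψ else 0) := by
  unfold zibPmf
  by_cases h : y = 0 <;> simp [h] <;> ring

lemma zibPmf_sum (ψ p : ℝ) (K : ℕ) :
    ∑ y : Fin (K+1), zibPmf ψ p K (y : ℕ) = 1 := by
  rw [Fin.sum_univ_eq_sum_range (fun y => zibPmf ψ p K y)]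
  simp only [zibPmf_eq, sum_add_distrib, ← mul_sum, binom_sum]
  rw [Finset.sum_ite_eq' (range (K+1)) 0 (fun _ => 1 - ψ)]
  simp

lemma zibPmf_mean (ψ p : ℝ) (K : ℕ) :
    ∑ y : Fin (K+1), zibPmf ψ p K (y : ℕ) * ((y : ℕ) : ℝ) = ψ * K * p := by
  rw [Fin.sum_univ_eq_sum_range (fun y => zibPmf ψ p K y * (y : ℝ))]
  have : ∀ y ∈ range (K+1), zibPmf ψ p K y * (y:ℝ)
      = ψ * ((K.choose y : ℝ) * p^y * (1-p)^(K-y) * (y:ℝ)) := by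
    intro y _
    rw [zibPmf_eq]
    by_cases h : y = 0 <;> simp [h] <;> ring
  rw [sum_congr rfl this, ← mul_sum, binom_mean]
  ring

lemma zibPmf_ind (ψ p : ℝ) (K : ℕ) :
    ∑ y : Fin (K+1), zibPmf ψ p K (y : ℕ) * (if (y : ℕ) ≠ 0 then (1:ℝ) else 0)
      = ψ * (1 - (1-p)^K) := by
  have h1 : ∀ y : Fin (K+1), zibPmf ψ p K (y : ℕ) * (if (y : ℕ) ≠ 0 then (1:ℝ) else 0)
      = zibPmf ψ p K (y : ℕ) - zibPmf ψ p K (y : ℕ) * (if (y : ℕ) = 0 then (1:ℝ) else 0) := by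
    intro y; by_cases h : (y : ℕ) = 0 <;> simp [h]
  simp only [h1, sum_sub_distrib, zibPmf_sum]
  have h2 : ∑ y : Fin (K+1), zibPmf ψ p K (y : ℕ) * (if (y : ℕ) = 0 then (1:ℝ) else 0)
      = 1 - ψ + ψ * (1-p)^K := by
    rw [Fin.sum_univ_eq_sum_range (fun y => zibPmf ψ p K y * (if y = 0 then (1:ℝ) else 0))]
    have : ∀ y ∈ range (K+1), zibPmf ψ p K y * (if y = 0 then (1:ℝ) else 0)
        = if y = 0 then 1 - ψ + ψ * (1-p)^K else 0 := by
      intro y _; by_cases h : y = 0 <;> simp [h, zibPmf]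
    rw [sum_congr rfl this, Finset.sum_ite_eq' (range (K+1)) 0]
    simp
  rw [h2]; ring

lemma sum_prod_apply {K N : ℕ} (F : Fin N → Fin (K+1) → ℝ) :
    ∑ ω : Fin N → Fin (K+1), ∏ j, F j (ω j) = ∏ j, ∑ y, F j y := by
  rw [Finset.prod_univ_sum, Fintype.piFinset_univ]

lemma zibExp_sum_coord (ψ p : ℝ) (K N : ℕ) (g : Fin (K+1) → ℝ) :
    zibExp ψ p K N (fun ω => ∑ i, g (ω i)) =
      (N : ℝ) * ∑ y : Fin (K+1), zibPmf ψ p K (y : ℕ) * g y := by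
  unfold zibExp zibJoint
  have h1 : ∀ ω : Fin N → Fin (K+1),
      (∏ i, zibPmf ψ p K (ω i)) * (∑ i, g (ω i))
      = ∑ i, ∏ j, (zibPmf ψ p K (ω j) * (if j = i then g (ω j) else 1)) := by
    intro ω
    rw [Finset.mul_sum]
    apply sum_congr rfl
    intro i _
    rw [Finset.prod_mul_distrib, Finset.prod_ite_eq' Finset.univ i (fun j => g (ω j))]
    simp [mul_comm]
  simp only [h1]
  rw [Finset.sum_comm]
  have h2 : ∀ i : Fin N,
      ∑ ω : Fin N → Fin (K+1), ∏ j, (zibPmf ψ p K (ω j) * (if j = i then g (ω j) else 1))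
      = ∑ y : Fin (K+1), zibPmf ψ p K (y : ℕ) * g y := by
    intro i
    rw [sum_prod_apply (fun j y => zibPmf ψ p K (y : ℕ) * (if j = i then g y else 1))]
    have h3 : ∀ j : Fin N, (∑ y : Fin (K+1), zibPmf ψ p K (y : ℕ) * (if j = i then g y else 1))
        = if j = i then (∑ y : Fin (K+1), zibPmf ψ p K (y : ℕ) * g y) else 1 := by
      intro j
      by_cases h : j = i <;> simp [h, zibPmf_sum]
    rw [Finset.prod_congr rfl (fun j _ => h3 j), Finset.prod_ite_eq' Finset.univ i]
    simp
  rw [Finset.sum_congr rfl (fun i _ => h2 i)]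
  simp [Finset.sum_const, Finset.card_univ, mul_comm]

/-- With data `Y₁, …, Y_N` i.i.d. ZIB`(ψ_T, K, p_T)`,
`θ_T = 1 − (1−p_T)^K`, `θ = 1 − (1−p)^K`, and score component
`S₂ = (d − s_d K p)/(p(1−p)) − (N − s_d) ψ K (1−θ)/((1 − ψθ)(1−p))`, one has
`E(S₂) = N ψ_T K (p_T − p θ_T)/(p(1−p)) − N (1 − ψ_T θ_T) ψ K (1−θ)/((1 − ψθ)(1−p))`. -/
theorem zib_score_S2_mean (ψT pT ψ p : ℝ)
    (hψT0 : 0 < ψT) (hψT1 : ψT < 1) (hpT0 : 0 < pT) (hpT1 : pT < 1)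
    (hψ0 : 0 < ψ) (hψ1 : ψ < 1) (hp0 : 0 < p) (hp1 : p < 1)
    (K N : ℕ) (hK : 0 < K) (hN : 0 < N) :
    zibExp ψT pT K N (fun ω =>
        (dTot ω - sDet ω * (K : ℝ) * p) / (p * (1 - p)) -
          ((N : ℝ) - sDet ω) * ψ * (K : ℝ) * (1 - (1 - (1 - p) ^ K)) /
            ((1 - ψ * (1 - (1 - p) ^ K)) * (1 - p))) =
      (N : ℝ) * ψT * (K : ℝ) * (pT - p * (1 - (1 - pT) ^ K)) / (p * (1 - p)) -
        (N : ℝ) * (1 - ψT * (1 - (1 - pT) ^ K)) * ψ * (K : ℝ) * (1 - (1 - (1 - p) ^ K)) /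
          ((1 - ψ * (1 - (1 - p) ^ K)) * (1 - p)) := by
  set t : ℝ := 1 - (1 - (1 - p) ^ K) with ht
  set E : ℝ := (1 - ψ * (1 - (1 - p) ^ K)) * (1 - p) with hE
  set g : Fin (K+1) → ℝ := fun y =>
    (((y : ℕ) : ℝ) - (if (y : ℕ) ≠ 0 then (1:ℝ) else 0) * (K : ℝ) * p) / (p * (1 - p)) -
      (1 - (if (y : ℕ) ≠ 0 then (1:ℝ) else 0)) * ψ * (K : ℝ) * t / E with hg
  have hf : (fun ω : Fin N → Fin (K+1) =>
      (dTot ω - sDet ω * (K : ℝ) * p) / (p * (1 - p)) -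
        ((N : ℝ) - sDet ω) * ψ * (K : ℝ) * t / E) = fun ω => ∑ i, g (ω i) := by
    funext ω
    have hb : sDet ω = ∑ i, (if (ω i : ℕ) ≠ 0 then (1:ℝ) else 0) := by
      simp [sDet, Finset.card_filter, apply_ite (fun n : ℕ => (n : ℝ))]
    rw [hb]
    unfold dTot
    simp only [hg, sum_sub_distrib, ← sum_div, ← sum_mul, sum_sub_distrib,
      sum_const, card_univ, Fintype.card_fin, nsmul_eq_mul, mul_one]
  rw [hf, zibExp_sum_coord]
  have expand : ∀ y : Fin (K+1), zibPmf ψT pT K (y : ℕ) * g y =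
      (zibPmf ψT pT K (y : ℕ) * ((y : ℕ) : ℝ)) * (1 / (p * (1 - p))) -
        (zibPmf ψT pT K (y : ℕ) * (if (y : ℕ) ≠ 0 then (1:ℝ) else 0)) * ((K : ℝ) * p / (p * (1 - p))) -
        zibPmf ψT pT K (y : ℕ) * (ψ * (K : ℝ) * t / E) +
        (zibPmf ψT pT K (y : ℕ) * (if (y : ℕ) ≠ 0 then (1:ℝ) else 0)) * (ψ * (K : ℝ) * t / E) := by
    intro y; rw [hg]; ring
  rw [Finset.sum_congr rfl (fun y _ => expand y)]
  simp only [sum_add_distrib, sum_sub_distrib, ← sum_mul]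
  rw [zibPmf_mean, zibPmf_ind, zibPmf_sum]
  ring
end

section
/- Let ψ_T, p_T, ψ, p ∈ (0,1), let K, N be positive integers, and set θ_T = 1 − (1−p_T)^K and θ = 1 − (1−p)^K. Let Y₁, …, Y_N be independent, identically distributed zero-inflated binomial (ZIB) random variables with parameters (ψ_T, K, p_T), let s_d be the number of indices i with Y_i ≥ 1 and d = ∑_{i=1}^N Y_i, and define S₂ = (d − s_d·K·p)/(p(1−p)) − (N − s_d)·ψ·K·(1−θ)/((1 − ψθ)(1−p)). Then Var(S₂) = N·ψ_T·θ_T·v/(p²(1−p)²) + N·ψ_T·θ_T·(1 − ψ_T·θ_T)·((K·p_T − K·p·θ_T)/(θ_T·p(1−p)) + ψ·K·(1−θ)/((1 − ψθ)(1−p)))², where v = (K²p_T² − K·p_T² + K·p_T)/θ_T − K²p_T²/θ_T². -/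
open Finset in
private lemma bern0 (n : ℕ) (x : ℝ) :
    ∑ k ∈ range (n+1), (n.choose k : ℝ) * x ^ k * (1 - x) ^ (n - k) = 1 := by
  have := congrArg (Polynomial.eval x) (bernsteinPolynomial.sum ℝ n)
  simpa [bernsteinPolynomial, Polynomial.eval_finset_sum] using this

open Finset in
private lemma bern1 (n : ℕ) (x : ℝ) :
    ∑ k ∈ range (n+1), (k : ℝ) * ((n.choose k : ℝ) * x ^ k * (1 - x) ^ (n - k)) = n * x := by
  have := congrArg (Polynomial.eval x) (bernsteinPolynomial.sum_smul ℝ n)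
  simpa [bernsteinPolynomial, Polynomial.eval_finset_sum, mul_assoc] using this

open Finset in
private lemma bern2 (n : ℕ) (x : ℝ) :
    ∑ k ∈ range (n+1), ((k * (k-1) : ℕ) : ℝ) * ((n.choose k : ℝ) * x ^ k * (1 - x) ^ (n - k))
      = ((n * (n-1) : ℕ) : ℝ) * x ^ 2 := by
  have := congrArg (Polynomial.eval x) (bernsteinPolynomial.sum_mul_smul ℝ n)
  simpa [bernsteinPolynomial, Polynomial.eval_finset_sum, mul_assoc] using this

private lemma cast_mul_sub (k : ℕ) : ((k * (k-1) : ℕ) : ℝ) = (k:ℝ)^2 - k := by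
  cases k with
  | zero => simp
  | succ m => push_cast [Nat.succ_sub_one]; ring

open Finset in
private lemma sum_prod_eq {K N : ℕ} (F : Fin N → Fin (K+1) → ℝ) :
    ∑ ω : Fin N → Fin (K+1), ∏ i, F i (ω i) = ∏ i, ∑ y, F i y := by
  rw [show (Finset.univ : Finset (Fin N → Fin (K+1)))
      = Fintype.piFinset (fun _ => Finset.univ) from (Fintype.piFinset_univ).symm]
  exact (Finset.prod_univ_sum _ _).symm

open Finset in
private lemma prod_pair {α : Type*} [Fintype α] [DecidableEq α] (f : α → ℝ) (i j : α)
    (hij : i ≠ j) (hf : ∀ k, k ≠ i → k ≠ j → f k = 1) : ∏ k, f k = f i * f j := by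
  rw [← Finset.mul_prod_erase univ f (mem_univ i),
      ← Finset.mul_prod_erase (univ.erase i) f
        (by simp [hij.symm] : j ∈ univ.erase i),
      Finset.prod_eq_one, mul_one]
  intro k hk
  simp only [mem_erase, mem_univ, and_true] at hk
  exact hf k hk.2 hk.1

open Finset in
private lemma exp_single {K N : ℕ} (w h : Fin (K+1) → ℝ) (hw : ∑ y, w y = 1) (i : Fin N) :
    ∑ ω : Fin N → Fin (K+1), (∏ k, w (ω k)) * h (ω i) = ∑ y, w y * h y := by
  have e : ∀ ω : Fin N → Fin (K+1), (∏ k, w (ω k)) * h (ω i)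
      = ∏ k, (w (ω k) * (if k = i then h (ω k) else 1)) := by
    intro ω
    rw [Finset.prod_mul_distrib, Finset.prod_ite_eq' Finset.univ i (fun k => h (ω k))]
    simp
  simp_rw [e]
  rw [sum_prod_eq (fun k y => w y * (if k = i then h y else 1))]
  refine (Finset.prod_eq_single i (fun k _ hk => ?_) (by simp)).trans ?_
  · simp [hk, hw]
  · simp

open Finset in
private lemma exp_pair {K N : ℕ} (w h : Fin (K+1) → ℝ) (hw : ∑ y, w y = 1) (i j : Fin N)
    (hij : i ≠ j) :
    ∑ ω : Fin N → Fin (K+1), (∏ k, w (ω k)) * (h (ω i) * h (ω j))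
      = (∑ y, w y * h y) * (∑ y, w y * h y) := by
  have e : ∀ ω : Fin N → Fin (K+1), (∏ k, w (ω k)) * (h (ω i) * h (ω j))
      = ∏ k, (w (ω k) * (if k = i then h (ω k) else if k = j then h (ω k) else 1)) := by
    intro ω
    rw [Finset.prod_mul_distrib,
      prod_pair (fun k => if k = i then h (ω k) else if k = j then h (ω k) else 1) i j hij
        (fun k hki hkj => by simp only [if_neg hki, if_neg hkj])]
    simp [hij]
  simp_rw [e]
  rw [sum_prod_eq (fun k y => w y * (if k = i then h y else if k = j then h y else 1))]
  rw [prod_pair (fun k => ∑ y : Fin (K+1), w y * (if k = i then h y else if k = j then h y else 1))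
      i j hij (fun k hki hkj => by simp only [if_neg hki, if_neg hkj, mul_one]; exact hw)]
  simp [hij]

open Finset in
private lemma var_formula {K N : ℕ} (w h : Fin (K+1) → ℝ) (hw : ∑ y, w y = 1) :
    (∑ ω : Fin N → Fin (K+1), (∏ k, w (ω k)) * (∑ i, h (ω i))^2)
      - (∑ ω : Fin N → Fin (K+1), (∏ k, w (ω k)) * (∑ i, h (ω i)))^2
    = (N : ℝ) * ((∑ y, w y * (h y * h y)) - (∑ y, w y * h y)^2) := by
  set e1 := ∑ y, w y * h y with he1
  set e2 := ∑ y, w y * (h y * h y) with he2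
  have hE1 : ∑ ω : Fin N → Fin (K+1), (∏ k, w (ω k)) * (∑ i, h (ω i)) = (N:ℝ) * e1 := by
    simp_rw [Finset.mul_sum]
    rw [Finset.sum_comm]
    rw [Finset.sum_congr rfl (fun i _ => exp_single w h hw i)]
    simp [Finset.card_univ, mul_comm]
    exact Or.inl rfl
  have hE2 : ∑ ω : Fin N → Fin (K+1), (∏ k, w (ω k)) * (∑ i, h (ω i))^2
      = (N:ℝ) * (e2 + ((N:ℝ) - 1) * (e1*e1)) := by
    have sq : ∀ ω : Fin N → Fin (K+1),
        (∏ k, w (ω k)) * (∑ i, h (ω i))^2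
        = ∑ i, ∑ j, (∏ k, w (ω k)) * (h (ω i) * h (ω j)) := by
      intro ω
      rw [_root_.sq, Finset.sum_mul_sum]
      rw [Finset.mul_sum]
      exact Finset.sum_congr rfl fun i _ => by rw [Finset.mul_sum]
    simp_rw [sq]
    rw [Finset.sum_comm]
    have inner : ∀ i : Fin N,
        (∑ ω : Fin N → Fin (K+1), ∑ j : Fin N, (∏ k, w (ω k)) * (h (ω i) * h (ω j)))
        = e2 + ((N:ℝ) - 1) * (e1*e1) := by
      intro i
      rw [Finset.sum_comm]
      have step : ∀ j : Fin N,
          (∑ ω : Fin N → Fin (K+1), (∏ k, w (ω k)) * (h (ω i) * h (ω j)))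
          = (e1*e1) + (if j = i then e2 - e1*e1 else 0) := by
        intro j
        by_cases hj : j = i
        · subst hj
          rw [exp_single w (fun y => h y * h y) hw j]
          simp [he2]
        · rw [exp_pair w h hw i j (Ne.symm hj)]
          simp [hj]
          rfl
      rw [Finset.sum_congr rfl (fun j _ => step j)]
      rw [Finset.sum_add_distrib, Finset.sum_const, Finset.sum_ite_eq' Finset.univ i]
      simp [Finset.card_univ]
      ring
    rw [Finset.sum_congr rfl (fun i _ => inner i), Finset.sum_const, Finset.card_univ]
    simp
    ring
  rw [hE2, hE1]
  ring

open Finset in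
private lemma zib_split (ψT pT c0 : ℝ) (K : ℕ) (g : ℕ → ℝ) :
    ∑ y : Fin (K+1), zibPmf ψT pT K (y:ℕ) * (if (y:ℕ) = 0 then c0 else g (y:ℕ))
      = (1 - ψT + ψT*(1-pT)^K) * c0
        + (∑ k ∈ range (K+1), ψT * ((K.choose k:ℝ) * pT^k * (1-pT)^(K-k)) * g k)
        - ψT * (1-pT)^K * g 0 := by
  rw [Fin.sum_univ_eq_sum_range (fun k => zibPmf ψT pT K k * (if k = 0 then c0 else g k)) (K+1)]
  rw [Finset.sum_range_succ' _ K,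
      Finset.sum_range_succ' (fun k => ψT * ((K.choose k:ℝ) * pT^k * (1-pT)^(K-k)) * g k) K]
  simp only [zibPmf, Nat.succ_ne_zero, if_false, if_true, Nat.choose_zero_right, ite_true,
    Nat.cast_one, pow_zero, Nat.sub_zero]
  have hsum : (∑ k ∈ range K, ψT * (K.choose (k+1):ℝ) * pT^(k+1) * (1-pT)^(K-(k+1)) * g (k+1))
      = ∑ k ∈ range K, ψT * ((K.choose (k+1):ℝ) * pT^(k+1) * (1-pT)^(K-(k+1))) * g (k+1) :=
    Finset.sum_congr rfl fun k _ => by ring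
  rw [hsum]
  ring

open Finset in
private lemma zib_sum_one (ψT pT : ℝ) (K : ℕ) :
    ∑ y : Fin (K+1), zibPmf ψT pT K (y:ℕ) = 1 := by
  have h := zib_split ψT pT 1 K (fun _ => 1)
  simp only [ite_self, mul_one] at h
  rw [h, ← Finset.mul_sum, bern0]
  ring

open Finset in
private lemma E1lem (ψT pT p c : ℝ) (K : ℕ) (hp : p ≠ 0) (hp1 : (1:ℝ)-p ≠ 0) :
    ∑ y : Fin (K+1), zibPmf ψT pT K (y:ℕ) *
      (if (y:ℕ) = 0 then -c else (((y:ℕ):ℝ) - (K:ℝ)*p)/(p*(1-p)))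
    = ψT*((K:ℝ)*pT - (K:ℝ)*p*(1-(1-pT)^K))/(p*(1-p)) - (1-ψT*(1-(1-pT)^K))*c := by
  rw [zib_split ψT pT (-c) K (fun k => ((k:ℝ) - (K:ℝ)*p)/(p*(1-p)))]
  have hsum : ∑ k ∈ range (K+1),
        ψT * ((K.choose k:ℝ)*pT^k*(1-pT)^(K-k)) * (((k:ℝ) - (K:ℝ)*p)/(p*(1-p)))
      = (ψT/(p*(1-p))) * ((K:ℝ)*pT) - (ψT*((K:ℝ)*p)/(p*(1-p))) * 1 := by
    calc ∑ k ∈ range (K+1),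
          ψT * ((K.choose k:ℝ)*pT^k*(1-pT)^(K-k)) * (((k:ℝ) - (K:ℝ)*p)/(p*(1-p)))
        = ∑ k ∈ range (K+1),
            ((ψT/(p*(1-p))) * ((k:ℝ)*((K.choose k:ℝ)*pT^k*(1-pT)^(K-k)))
              - (ψT*((K:ℝ)*p)/(p*(1-p))) * ((K.choose k:ℝ)*pT^k*(1-pT)^(K-k))) :=
          Finset.sum_congr rfl fun k _ => by field_simp
      _ = (ψT/(p*(1-p))) * ((K:ℝ)*pT) - (ψT*((K:ℝ)*p)/(p*(1-p))) * 1 := by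
          rw [Finset.sum_sub_distrib, ← Finset.mul_sum, ← Finset.mul_sum, bern1, bern0]
  rw [hsum]
  push_cast
  field_simp
  ring

open Finset in
private lemma E2lem (ψT pT p c : ℝ) (K : ℕ) (hp : p ≠ 0) (hp1 : (1:ℝ)-p ≠ 0) :
    ∑ y : Fin (K+1), zibPmf ψT pT K (y:ℕ) *
      (if (y:ℕ) = 0 then c*c else ((((y:ℕ):ℝ) - (K:ℝ)*p)/(p*(1-p)))^2)
    = (1 - ψT + ψT*(1-pT)^K) * (c*c)
      + ψT * ((((K:ℝ)^2-(K:ℝ))*pT^2) + (1-2*(K:ℝ)*p)*((K:ℝ)*pT) + ((K:ℝ)*p)^2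
          - (1-pT)^K * ((K:ℝ)*p)^2) / (p*(1-p))^2 := by
  rw [zib_split ψT pT (c*c) K (fun k => (((k:ℝ) - (K:ℝ)*p)/(p*(1-p)))^2)]
  have hsum : ∑ k ∈ range (K+1),
        ψT * ((K.choose k:ℝ)*pT^k*(1-pT)^(K-k)) * ((((k:ℝ) - (K:ℝ)*p)/(p*(1-p)))^2)
      = (ψT/(p*(1-p))^2) * (((K*(K-1):ℕ):ℝ) * pT^2)
        + (ψT*(1-2*(K:ℝ)*p)/(p*(1-p))^2) * ((K:ℝ)*pT)
        + (ψT*((K:ℝ)*p)^2/(p*(1-p))^2) * 1 := by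
    calc ∑ k ∈ range (K+1),
          ψT * ((K.choose k:ℝ)*pT^k*(1-pT)^(K-k)) * ((((k:ℝ) - (K:ℝ)*p)/(p*(1-p)))^2)
        = ∑ k ∈ range (K+1),
            ((ψT/(p*(1-p))^2) * (((k*(k-1):ℕ):ℝ)*((K.choose k:ℝ)*pT^k*(1-pT)^(K-k)))
              + (ψT*(1-2*(K:ℝ)*p)/(p*(1-p))^2) * ((k:ℝ)*((K.choose k:ℝ)*pT^k*(1-pT)^(K-k)))
              + (ψT*((K:ℝ)*p)^2/(p*(1-p))^2) * ((K.choose k:ℝ)*pT^k*(1-pT)^(K-k))) :=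
          Finset.sum_congr rfl fun k _ => by rw [cast_mul_sub]; field_simp; ring
      _ = _ := by
          rw [Finset.sum_add_distrib, Finset.sum_add_distrib,
            ← Finset.mul_sum, ← Finset.mul_sum, ← Finset.mul_sum, bern2, bern1, bern0, sq pT]
  rw [hsum, cast_mul_sub]
  push_cast
  field_simp
  ring

/-- With data `Y₁, …, Y_N` i.i.d. ZIB`(ψ_T, K, p_T)`,
`θ_T = 1 − (1−p_T)^K`, `θ = 1 − (1−p)^K`, and score component
`S₂ = (d − s_d K p)/(p(1−p)) − (N − s_d) ψ K (1−θ)/((1 − ψθ)(1−p))`, one has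
`Var(S₂) = N ψ_T θ_T v/(p²(1−p)²)
  + N ψ_T θ_T (1 − ψ_T θ_T) ((K p_T − K p θ_T)/(θ_T p(1−p)) + ψ K (1−θ)/((1 − ψθ)(1−p)))²`,
where `v = (K²p_T² − K p_T² + K p_T)/θ_T − K²p_T²/θ_T²`. -/
theorem zib_score_S2_variance (ψT pT ψ p : ℝ)
    (hψT0 : 0 < ψT) (hψT1 : ψT < 1) (hpT0 : 0 < pT) (hpT1 : pT < 1)
    (hψ0 : 0 < ψ) (hψ1 : ψ < 1) (hp0 : 0 < p) (hp1 : p < 1)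
    (K N : ℕ) (hK : 0 < K) (hN : 0 < N) :
    zibExp ψT pT K N (fun ω =>
          ((dTot ω - sDet ω * (K : ℝ) * p) / (p * (1 - p)) -
            ((N : ℝ) - sDet ω) * ψ * (K : ℝ) * (1 - (1 - (1 - p) ^ K)) /
              ((1 - ψ * (1 - (1 - p) ^ K)) * (1 - p))) ^ 2) -
        (zibExp ψT pT K N (fun ω =>
          (dTot ω - sDet ω * (K : ℝ) * p) / (p * (1 - p)) -
            ((N : ℝ) - sDet ω) * ψ * (K : ℝ) * (1 - (1 - (1 - p) ^ K)) /
              ((1 - ψ * (1 - (1 - p) ^ K)) * (1 - p)))) ^ 2 =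
      (N : ℝ) * ψT * (1 - (1 - pT) ^ K) *
          (((K : ℝ) ^ 2 * pT ^ 2 - (K : ℝ) * pT ^ 2 + (K : ℝ) * pT) / (1 - (1 - pT) ^ K) -
            (K : ℝ) ^ 2 * pT ^ 2 / (1 - (1 - pT) ^ K) ^ 2) /
          (p ^ 2 * (1 - p) ^ 2) +
        (N : ℝ) * ψT * (1 - (1 - pT) ^ K) * (1 - ψT * (1 - (1 - pT) ^ K)) *
          (((K : ℝ) * pT - (K : ℝ) * p * (1 - (1 - pT) ^ K)) /
              ((1 - (1 - pT) ^ K) * p * (1 - p)) +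
            ψ * (K : ℝ) * (1 - (1 - (1 - p) ^ K)) /
              ((1 - ψ * (1 - (1 - p) ^ K)) * (1 - p))) ^ 2 := by
  have hp : p ≠ 0 := ne_of_gt hp0
  have hp1' : (1:ℝ) - p ≠ 0 := ne_of_gt (by linarith)
  have hq0 : (0:ℝ) < (1-p)^K := pow_pos (by linarith) K
  have hq1 : (1-p)^K ≤ 1 := pow_le_one₀ (by linarith) (by linarith)
  have hψθ : (1:ℝ) - ψ * (1 - (1 - p) ^ K) ≠ 0 := by nlinarith
  have hθT : (0:ℝ) < 1 - (1-pT)^K := by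
    have : (1-pT)^K < 1 := pow_lt_one₀ (by linarith) (by linarith) hK.ne'
    linarith
  set c := ψ * (K:ℝ) * (1 - (1 - (1 - p) ^ K)) / ((1 - ψ * (1 - (1 - p) ^ K)) * (1 - p)) with hc
  have hw : ∑ y : Fin (K+1), zibPmf ψT pT K (y:ℕ) = 1 := zib_sum_one ψT pT K
  have hstat : ∀ ω : Fin N → Fin (K+1),
      (dTot ω - sDet ω * (K:ℝ) * p) / (p * (1 - p)) -
        ((N:ℝ) - sDet ω) * ψ * (K:ℝ) * (1 - (1 - (1 - p) ^ K)) /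
          ((1 - ψ * (1 - (1 - p) ^ K)) * (1 - p))
      = ∑ i, (if ((ω i : ℕ)) = 0 then -c
          else (((ω i : ℕ):ℝ) - (K:ℝ)*p)/(p*(1-p))) := by
    intro ω
    have hs : sDet ω = ∑ i, (if (ω i:ℕ) ≠ 0 then (1:ℝ) else 0) := by
      rw [sDet, Finset.card_filter]
      push_cast
      rfl
    have hsum : ∑ i, (if ((ω i : ℕ)) = 0 then -c
          else (((ω i : ℕ):ℝ) - (K:ℝ)*p)/(p*(1-p)))
        = ∑ i, (((ω i : ℕ):ℝ)/(p*(1-p))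
            - (if (ω i:ℕ) ≠ 0 then (1:ℝ) else 0) * ((K:ℝ)*p/(p*(1-p)))
            - (1 - (if (ω i:ℕ) ≠ 0 then (1:ℝ) else 0)) * c) := by
      refine Finset.sum_congr rfl fun i _ => ?_
      by_cases hy : (ω i : ℕ) = 0
      · simp [hy]
      · simp only [hy, if_false, ne_eq, not_false_eq_true, if_true]
        ring
    rw [hsum, Finset.sum_sub_distrib, Finset.sum_sub_distrib, ← Finset.sum_mul,
      ← Finset.sum_mul, Finset.sum_sub_distrib, Finset.sum_const, Finset.card_univ, ← hs,
      ← Finset.sum_div]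
    simp only [dTot, Fintype.card_fin, nsmul_eq_mul, mul_one]
    rw [hc]
    field_simp
  have k2 : zibExp ψT pT K N (fun ω =>
          ((dTot ω - sDet ω * (K : ℝ) * p) / (p * (1 - p)) -
            ((N : ℝ) - sDet ω) * ψ * (K : ℝ) * (1 - (1 - (1 - p) ^ K)) /
              ((1 - ψ * (1 - (1 - p) ^ K)) * (1 - p))) ^ 2)
      = ∑ ω : Fin N → Fin (K+1), (∏ i, zibPmf ψT pT K ((ω i : ℕ))) *
          (∑ i, (if ((ω i : ℕ)) = 0 then -c
            else (((ω i : ℕ):ℝ) - (K:ℝ)*p)/(p*(1-p))))^2 := by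
    unfold zibExp zibJoint
    exact Finset.sum_congr rfl fun ω _ => by beta_reduce; rw [hstat ω]
  have k1 : zibExp ψT pT K N (fun ω =>
          (dTot ω - sDet ω * (K : ℝ) * p) / (p * (1 - p)) -
            ((N : ℝ) - sDet ω) * ψ * (K : ℝ) * (1 - (1 - (1 - p) ^ K)) /
              ((1 - ψ * (1 - (1 - p) ^ K)) * (1 - p)))
      = ∑ ω : Fin N → Fin (K+1), (∏ i, zibPmf ψT pT K ((ω i : ℕ))) *
          (∑ i, (if ((ω i : ℕ)) = 0 then -c
            else (((ω i : ℕ):ℝ) - (K:ℝ)*p)/(p*(1-p)))) := by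
    unfold zibExp zibJoint
    exact Finset.sum_congr rfl fun ω _ => by beta_reduce; rw [hstat ω]
  rw [k2, k1]
  have vf := var_formula (K := K) (N := N)
    (fun y : Fin (K+1) => zibPmf ψT pT K (y:ℕ))
    (fun y : Fin (K+1) => if (y:ℕ) = 0 then -c else (((y:ℕ):ℝ) - (K:ℝ)*p)/(p*(1-p))) hw
  beta_reduce at vf
  rw [vf]
  have hmul : ∀ y : Fin (K+1),
      (if (y:ℕ) = 0 then -c else (((y:ℕ):ℝ) - (K:ℝ)*p)/(p*(1-p))) *
        (if (y:ℕ) = 0 then -c else (((y:ℕ):ℝ) - (K:ℝ)*p)/(p*(1-p)))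
      = if (y:ℕ) = 0 then c*c else ((((y:ℕ):ℝ) - (K:ℝ)*p)/(p*(1-p)))^2 := by
    intro y
    by_cases hy : (y:ℕ) = 0
    · simp only [hy, if_true, ite_true]
      ring
    · simp only [hy, if_false, ite_false]
      ring
  simp only [hmul]
  rw [E2lem ψT pT p c K hp hp1', E1lem ψT pT p c K hp hp1']
  field_simp
  ring
end
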